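/- Let N > m > 1, m* = Nm/(N−m), λ > 0, and s₀ ≥ e². Let f : ℝ → ℝ be continuous with f(s) = s^(m*−1)/(log s)^λ for all s ≥ s₀. Then lim_{s→+∞} s·f(s)/F(s) = m*; in particular limsup_{s→+∞} s·f(s)/F(s) = m*, so the strict subcriticality condition limsup_{s→+∞} s·f(s)/F(s) < m* fails for this f. -/

import Mathlib

open Set Filter MeasureTheory

noncomputable def phim (m x : ℝ) : ℝ := |x| ^ (m - 2) * x

noncomputable def Fint (f : ℝ → ℝ) (s : ℝ) : ℝ := ∫ t in (0:ℝ)..s, f t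

noncomputable def Qfun (N m : ℝ) (f : ℝ → ℝ) (s : ℝ) : ℝ :=
  m * N * Fint f s - (N - m) * s * f s

/-- `u` (with derivative function `u'`) is a solution of the radial quasilinear
equation on the set `J`. -/
def IsSolutionOn (N m : ℝ) (f : ℝ → ℝ) (J : Set ℝ) (u u' : ℝ → ℝ) : Prop :=
  (∀ r ∈ J, HasDerivWithinAt u (u' r) J r) ∧ ContinuousOn u' J ∧
    ∃ w' : ℝ → ℝ,
      (∀ r ∈ J ∩ Set.Ioi (0:ℝ),
        HasDerivWithinAt (fun t => phim m (u' t)) (w' r) (J ∩ Set.Ioi (0:ℝ)) r) ∧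
      ContinuousOn w' (J ∩ Set.Ioi (0:ℝ)) ∧
      ∀ r ∈ J ∩ Set.Ioi (0:ℝ), w' r + ((N - 1) / r) * phim m (u' r) + f (u r) = 0

def IsIVPSolutionOn (N m : ℝ) (f : ℝ → ℝ) (α : ℝ) (J : Set ℝ) (u u' : ℝ → ℝ) : Prop :=
  IsSolutionOn N m f J u u' ∧ u 0 = α ∧ u' 0 = 0

/-- Admissible domains for the IVP: `[0,∞)` or `[0,R)` with `0 < R`. -/
def IVPDomain (J : Set ℝ) : Prop :=
  J = Set.Ici (0:ℝ) ∨ ∃ R : ℝ, 0 < R ∧ J = Set.Ico (0:ℝ) R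

/-- The solution `u` of the IVP on `J` cannot be extended to a solution on a
strictly larger admissible domain. -/
def Noncontinuable (N m : ℝ) (f : ℝ → ℝ) (α : ℝ) (J : Set ℝ) (u u' : ℝ → ℝ) : Prop :=
  ∀ J' : Set ℝ, IVPDomain J' → J ⊂ J' →
    ¬ ∃ v v' : ℝ → ℝ, IsIVPSolutionOn N m f α J' v v' ∧ Set.EqOn v u J ∧ Set.EqOn v' u' J

open Classical in
/-- The filter describing the approach to the right endpoint of an IVP domain. -/
noncomputable def domEnd (J : Set ℝ) : Filter ℝ :=
  if J = Set.Ici (0:ℝ) then Filter.atTop else nhdsWithin (sSup J) (Set.Iio (sSup J))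

def LocLipschitzOn (f : ℝ → ℝ) (S : Set ℝ) : Prop :=
  ∀ x ∈ S, ∃ ε : ℝ, 0 < ε ∧ ∃ K : NNReal, LipschitzOnWith K f (Metric.ball x ε ∩ S)

/-- Assumption (f₂). -/
structure Hf2 (f : ℝ → ℝ) (βm βp : ℝ) (γm γp : EReal) : Prop where
  hβm : βm < 0
  hβp : 0 < βp
  hFneg : ∀ s : ℝ, s ∈ Set.Ioo βm βp → s ≠ 0 → Fint f s < 0
  hFβm : Fint f βm = 0
  hFβp : Fint f βp = 0
  hγp : (βp : EReal) < γp
  hγm : γm < (βm : EReal)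
  hfpos : ∀ s : ℝ, βp < s → (s : EReal) < γp → 0 < f s
  hfneg : ∀ s : ℝ, γm < (s : EReal) → s < βm → f s < 0
  hγpzero : ∀ s : ℝ, (s : EReal) = γp → f s = 0
  hγmzero : ∀ s : ℝ, (s : EReal) = γm → f s = 0
  hlim : ∃ L : EReal,
    Filter.Tendsto (fun s : ℝ => (Fint f s : EReal))
      (Filter.comap Real.toEReal (nhdsWithin γp (Set.Iio γp))) (nhds L) ∧
    Filter.Tendsto (fun s : ℝ => (Fint f s : EReal))
      (Filter.comap Real.toEReal (nhdsWithin γm (Set.Ioi γm))) (nhds L)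
  hlip : LocLipschitzOn f {s : ℝ | (γm < (s : EReal) ∧ s < 0) ∨ (0 < s ∧ (s : EReal) < γp)}

/-- Assumption (f₃). -/
def Hf3 (N m : ℝ) (f : ℝ → ℝ) (βm βp : ℝ) (γm γp : EReal) : Prop :=
  (γp = ⊤ →
    (∃ βb : ℝ, βp < βb ∧ ∀ s : ℝ, βb ≤ s → 0 ≤ Qfun N m f s) ∧
    (∃ θ : ℝ, θ ∈ Set.Ioo (0:ℝ) 1 ∧
      Filter.Tendsto (fun s : ℝ =>
        sInf ((fun p : ℝ × ℝ =>
          Qfun N m f p.2 * ((|s| ^ (m - 2) * s) / f p.1) ^ (N / m)) ''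
            (Set.Icc (θ * s) s ×ˢ Set.Icc (θ * s) s)))
        Filter.atTop Filter.atTop)) ∧
  (γm = ⊥ →
    (∃ βb : ℝ, -βb < βm ∧ ∀ s : ℝ, s ≤ -βb → 0 ≤ Qfun N m f s) ∧
    (∃ θ : ℝ, θ ∈ Set.Ioo (0:ℝ) 1 ∧
      Filter.Tendsto (fun s : ℝ =>
        sInf ((fun p : ℝ × ℝ =>
          Qfun N m f p.2 * ((|s| ^ (m - 2) * s) / f p.1) ^ (N / m)) ''
            (Set.Icc s (θ * s) ×ˢ Set.Icc s (θ * s))))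
        Filter.atBot Filter.atTop))

/-- Assumption (f₄). -/
def Hf4 (N m : ℝ) (f : ℝ → ℝ) (βm βp : ℝ) (γm γp : EReal) : Prop :=
  (γp ≠ ⊤ → ∃ L₀ : ℝ, 0 < L₀ ∧ ∃ βb : ℝ, βp < βb ∧
    ∀ s : ℝ, βb ≤ s → (s : EReal) < γp → f s ≤ L₀ * (γp.toReal - s) ^ (m - 1)) ∧
  (γm ≠ ⊥ → ∃ L₀ : ℝ, 0 < L₀ ∧ ∃ βb : ℝ, -βm < βb ∧
    ∀ s : ℝ, γm < (s : EReal) → s ≤ -βb → -f s ≤ L₀ * (s - γm.toReal) ^ (m - 1))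

lemma aux_g_tendsto (A lam : ℝ) (hA : 0 < A) (hlam : 0 < lam) :
    Tendsto (fun s : ℝ => s ^ A * Real.log s ^ (-lam) / A) atTop atTop := by
  have hr : 0 < A / (2 * lam) := by positivity
  have h1 : ∀ᶠ s : ℝ in atTop, Real.log s ≤ s ^ (A / (2 * lam)) := by
    have := (isLittleO_log_rpow_atTop hr).bound one_pos
    filter_upwards [this, eventually_ge_atTop (1:ℝ)] with s hs hs1
    calc Real.log s ≤ ‖Real.log s‖ := le_abs_self _
      _ ≤ 1 * ‖s ^ (A / (2*lam))‖ := hs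
      _ = |s ^ (A / (2*lam))| := by simp
      _ = s ^ (A / (2*lam)) := abs_of_nonneg (Real.rpow_nonneg (by linarith) _)
  have h2 : ∀ᶠ s : ℝ in atTop, s ^ (A/2) / A ≤ s ^ A * Real.log s ^ (-lam) / A := by
    filter_upwards [h1, eventually_ge_atTop (Real.exp 1)] with s hs hse
    have hs1 : (1:ℝ) < s := lt_of_lt_of_le (by nlinarith [Real.add_one_le_exp (1:ℝ)]) hse
    have hs0 : (0:ℝ) < s := by linarith
    have hlog1 : (1:ℝ) ≤ Real.log s := by
      rw [← Real.log_exp 1]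
      exact Real.log_le_log (Real.exp_pos 1) hse
    have hlogpos : 0 < Real.log s := by linarith
    have key : Real.log s ^ lam ≤ s ^ (A/2) := by
      calc Real.log s ^ lam ≤ (s ^ (A/(2*lam))) ^ lam :=
            Real.rpow_le_rpow (by linarith) hs hlam.le
        _ = s ^ (A/2) := by
            rw [← Real.rpow_mul hs0.le]
            congr 1
            field_simp
    have h3 : s ^ (A/2) ≤ s ^ A * Real.log s ^ (-lam) := by
      rw [Real.rpow_neg hlogpos.le]
      have hmul : s ^ (A/2) * Real.log s ^ lam ≤ s ^ (A/2) * s ^ (A/2) :=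
        mul_le_mul_of_nonneg_left key (Real.rpow_nonneg hs0.le _)
      have hsq : s ^ (A/2) * s ^ (A/2) = s ^ A := by
        rw [← Real.rpow_add hs0]; norm_num
      rw [← div_eq_mul_inv, le_div_iff₀ (by positivity)]
      linarith
    exact (div_le_div_iff_of_pos_right hA).mpr h3
  exact tendsto_atTop_mono' _ h2 ((tendsto_rpow_atTop (by positivity)).atTop_div_const hA)

lemma aux_deriv (A lam t : ℝ) (hA : 0 < A) (ht : 1 < t) (hlt : 0 < Real.log t) :
    HasDerivAt (fun s : ℝ => s ^ A * Real.log s ^ (-lam) / A)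
      ((t ^ (A-1) / Real.log t ^ lam) * (1 - lam / (A * Real.log t))) t := by
  have ht0 : (0:ℝ) < t := by linarith
  have h1 : HasDerivAt (fun s : ℝ => s ^ A) (A * t ^ (A-1)) t :=
    Real.hasDerivAt_rpow_const (Or.inl ht0.ne')
  have h2 : HasDerivAt (fun s : ℝ => Real.log s ^ (-lam))
      (t⁻¹ * -lam * Real.log t ^ (-lam - 1)) t :=
    (Real.hasDerivAt_log ht0.ne').rpow_const (Or.inl hlt.ne')
  have h3 := (h1.mul h2).div_const A
  refine h3.congr_deriv ?_
  have e1 : t ^ A = t ^ (A-1) * t := by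
    rw [← Real.rpow_add_one ht0.ne' (A-1)]; ring_nf
  have e2 : Real.log t ^ (-lam - 1) = Real.log t ^ (-lam) / Real.log t := by
    rw [← Real.rpow_sub_one hlt.ne' (-lam)]
  have e3 : Real.log t ^ (-lam) = (Real.log t ^ lam)⁻¹ := by
    rw [← Real.rpow_neg hlt.le]
  rw [e1, e2, e3]
  have hp1 : t ^ (A-1) ≠ 0 := (Real.rpow_pos_of_pos ht0 _).ne'
  have hp2 : Real.log t ^ lam ≠ 0 := (Real.rpow_pos_of_pos hlt _).ne'
  field_simp
  ring


/-- for the log-corrected critical nonlinearity,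
`s f(s)/F(s) → m*`, so the strict subcriticality condition fails. -/
theorem log_critical_example_not_subcritical
    (N m : ℝ) (hm : 1 < m) (hNm : m < N) (lam s₀ : ℝ)
    (hlam : 0 < lam) (hs₀ : Real.exp 2 ≤ s₀)
    (f : ℝ → ℝ) (hf : Continuous f)
    (hfs : ∀ s : ℝ, s₀ ≤ s → f s = s ^ (N * m / (N - m) - 1) / (Real.log s) ^ lam) :
    Filter.Tendsto (fun s : ℝ => s * f s / Fint f s) Filter.atTop
      (nhds (N * m / (N - m))) ∧
    Filter.limsup (fun s : ℝ => s * f s / Fint f s) Filter.atTop = N * m / (N - m) ∧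
    ¬ Filter.limsup (fun s : ℝ => s * f s / Fint f s) Filter.atTop
        < N * m / (N - m) := by
  have hNm0 : 0 < N - m := sub_pos.mpr hNm
  set A := N * m / (N - m) with hAdef
  have hA1 : 1 < A := by
    rw [hAdef, lt_div_iff₀ hNm0]; nlinarith
  have hA0 : 0 < A := by linarith
  clear_value A
  have hexp2 : (3:ℝ) ≤ Real.exp 2 := by nlinarith [Real.add_one_le_exp (2:ℝ)]
  have hs01 : (1:ℝ) < s₀ := by linarith
  have hlog2 : ∀ t : ℝ, s₀ ≤ t → 2 ≤ Real.log t := by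
    intro t ht
    rw [← Real.log_exp 2]
    exact Real.log_le_log (Real.exp_pos 2) (le_trans hs₀ ht)
  set g : ℝ → ℝ := fun s => s ^ A * Real.log s ^ (-lam) / A with hgdef
  have hbase : ∀ t : ℝ, s₀ ≤ t → 0 < t ∧ 0 < Real.log t ∧ 0 < f t := by
    intro t ht
    have ht0 : (0:ℝ) < t := by linarith
    have hlt : 0 < Real.log t := by linarith [hlog2 t ht]
    refine ⟨ht0, hlt, ?_⟩
    rw [hfs t ht]
    exact div_pos (Real.rpow_pos_of_pos ht0 _) (Real.rpow_pos_of_pos hlt _)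
  have hgpos : ∀ t : ℝ, s₀ ≤ t → 0 < g t := by
    intro t ht
    obtain ⟨ht0, hlt, -⟩ := hbase t ht
    exact div_pos (mul_pos (Real.rpow_pos_of_pos ht0 _) (Real.rpow_pos_of_pos hlt _)) hA0
  have hderiv : ∀ t : ℝ, s₀ ≤ t → HasDerivAt g (f t * (1 - lam / (A * Real.log t))) t := by
    intro t ht
    obtain ⟨ht0, hlt, -⟩ := hbase t ht
    have h := aux_deriv A lam t hA0 (by linarith) hlt
    rw [hfs t ht]
    exact h
  have hcont : ∀ a b : ℝ, s₀ ≤ a →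
      ContinuousOn (fun t => f t * (1 - lam / (A * Real.log t))) (Set.Icc a b) := by
    intro a b ha
    have hlogc : ContinuousOn Real.log (Set.Icc a b) := by
      apply Real.continuousOn_log.mono
      intro x hx
      have : (0:ℝ) < x := lt_of_lt_of_le (by linarith) hx.1
      simp only [Set.mem_compl_iff, Set.mem_singleton_iff]
      exact this.ne'
    refine hf.continuousOn.mul (continuousOn_const.sub
      (ContinuousOn.div continuousOn_const (continuousOn_const.mul hlogc) ?_))
    intro x hx
    have := hlog2 x (le_trans ha hx.1)
    exact (mul_pos hA0 (by linarith)).ne'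
  have hFTC : ∀ a b : ℝ, s₀ ≤ a → a ≤ b →
      g b - g a = ∫ t in a..b, f t * (1 - lam / (A * Real.log t)) := by
    intro a b ha hab
    refine (intervalIntegral.integral_eq_sub_of_hasDerivAt ?_ ?_).symm
    · intro t ht
      rw [Set.uIcc_of_le hab] at ht
      exact hderiv t (le_trans ha ht.1)
    · apply ContinuousOn.intervalIntegrable
      rw [Set.uIcc_of_le hab]
      exact hcont a b ha
  have hFadd : ∀ a b : ℝ, Fint f b = Fint f a + ∫ t in a..b, f t := by
    intro a b
    simp only [Fint]
    exact (intervalIntegral.integral_add_adjacent_intervals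
      (hf.intervalIntegrable _ _) (hf.intervalIntegrable _ _)).symm
  have hgtop : Tendsto g atTop atTop := aux_g_tendsto A lam hA0 hlam
  have hFg : Tendsto (fun s => Fint f s / g s) atTop (nhds 1) := by
    rw [Metric.tendsto_nhds]
    intro ε hε
    set δ := min (ε/4) (1/2) with hδdef
    have hδ0 : 0 < δ := lt_min (by linarith) one_half_pos
    have hδh : δ ≤ 1/2 := min_le_right _ _
    have hδε : δ ≤ ε/4 := min_le_left _ _
    have h1δ : 0 < 1 - δ := by linarith
    set s₁ := max s₀ (Real.exp (lam / (A*δ))) with hs₁def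
    have hs₁0 : s₀ ≤ s₁ := le_max_left _ _
    have hcomp : ∀ t : ℝ, s₁ ≤ t →
        (1-δ) * f t ≤ f t * (1 - lam/(A*Real.log t)) ∧
          f t * (1 - lam/(A*Real.log t)) ≤ f t := by
      intro t ht
      obtain ⟨ht0, hlt, hft⟩ := hbase t (le_trans hs₁0 ht)
      have hloge : lam / (A*δ) ≤ Real.log t := by
        rw [← Real.log_exp (lam/(A*δ))]
        exact Real.log_le_log (Real.exp_pos _) (le_trans (le_max_right _ _) ht)
      have hq : lam / (A * Real.log t) ≤ δ := by
        rw [div_le_iff₀ (by positivity)]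
        rw [div_le_iff₀ (by positivity)] at hloge
        nlinarith
      have hqpos : 0 < lam / (A * Real.log t) := by positivity
      constructor
      · rw [mul_comm (1-δ)]
        exact mul_le_mul_of_nonneg_left (by linarith) hft.le
      · nlinarith
    have hbound : ∀ s : ℝ, s₁ ≤ s →
        g s - g s₁ ≤ Fint f s - Fint f s₁ ∧
          (1-δ) * (Fint f s - Fint f s₁) ≤ g s - g s₁ := by
      intro s hs
      have hint_f : IntervalIntegrable f volume s₁ s := hf.intervalIntegrable _ _
      have hint_g : IntervalIntegrable (fun t => f t * (1 - lam/(A*Real.log t))) volume s₁ s := by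
        apply ContinuousOn.intervalIntegrable
        rw [Set.uIcc_of_le hs]
        exact hcont s₁ s hs₁0
      have e1 := hFTC s₁ s hs₁0 hs
      have e2 : Fint f s - Fint f s₁ = ∫ t in s₁..s, f t := by
        have := hFadd s₁ s; linarith
      constructor
      · rw [e1, e2]
        exact intervalIntegral.integral_mono_on hs hint_g hint_f (fun t ht => (hcomp t ht.1).2)
      · rw [e1, e2, ← intervalIntegral.integral_const_mul]
        exact intervalIntegral.integral_mono_on hs (hint_f.const_mul _) hint_g
          (fun t ht => (hcomp t ht.1).1)
    have hε4 : 0 < ε/4 := by linarith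
    have hC1 : Tendsto (fun s => (Fint f s₁ - g s₁) / g s) atTop (nhds 0) :=
      tendsto_const_nhds.div_atTop hgtop
    have hC2 : Tendsto (fun s => (Fint f s₁ - g s₁/(1-δ)) / g s) atTop (nhds 0) :=
      tendsto_const_nhds.div_atTop hgtop
    filter_upwards [eventually_ge_atTop s₁, eventually_ge_atTop s₀,
      Metric.tendsto_nhds.mp hC1 (ε/4) hε4, Metric.tendsto_nhds.mp hC2 (ε/4) hε4]
      with s hs hs0' d1 d2
    rw [Real.dist_eq, sub_zero] at d1 d2
    rw [Real.dist_eq]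
    obtain ⟨hb1, hb2⟩ := hbound s hs
    have hG : 0 < g s := hgpos s hs0'
    rw [abs_lt] at d1 d2 ⊢
    have l1 : 1 + (Fint f s₁ - g s₁)/g s ≤ Fint f s / g s := by
      have h := (div_le_div_iff_of_pos_right hG).mpr
        (show g s + (Fint f s₁ - g s₁) ≤ Fint f s by linarith)
      rwa [add_div, div_self hG.ne'] at h
    have l2 : Fint f s / g s ≤ 1/(1-δ) + (Fint f s₁ - g s₁/(1-δ))/g s := by
      have hcanc : (1-δ) * (g s₁/(1-δ)) = g s₁ := mul_div_cancel₀ _ h1δ.ne'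
      have hFs_le : Fint f s ≤ g s / (1-δ) + (Fint f s₁ - g s₁/(1-δ)) := by
        rw [← sub_le_iff_le_add, le_div_iff₀ h1δ]
        nlinarith [hb2, hcanc]
      have h := (div_le_div_iff_of_pos_right hG).mpr hFs_le
      rwa [add_div, div_div, mul_comm (1-δ) (g s), ← div_div, div_self hG.ne'] at h
    have h1d : 1/(1-δ) ≤ 1 + 2*δ := by
      rw [div_le_iff₀ h1δ]; nlinarith
    constructor
    · linarith [d1.1]
    · linarith [d2.2]
  -- final assembly
  have htend : Tendsto (fun s : ℝ => s * f s / Fint f s) atTop (nhds A) := by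
    have h1 : Tendsto (fun s : ℝ => A / (Fint f s / g s)) atTop (nhds A) := by
      have h := (tendsto_const_nhds (x := A)).div hFg one_ne_zero
      rw [div_one] at h
      exact h
    apply h1.congr'
    filter_upwards [eventually_ge_atTop s₀] with s hs
    obtain ⟨hs0, hlt, hft⟩ := hbase s hs
    have hAg : A * g s = s * f s := by
      show A * (s ^ A * Real.log s ^ (-lam) / A) = s * f s
      rw [hfs s hs, Real.rpow_neg hlt.le]
      have e : s ^ A = s ^ (A-1) * s := by
        rw [← Real.rpow_add_one hs0.ne' (A-1)]; ring_nf
      rw [e]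
      have hp2 : Real.log s ^ lam ≠ 0 := (Real.rpow_pos_of_pos hlt _).ne'
      field_simp
    rw [div_div_eq_mul_div, hAg]
  refine ⟨htend, htend.limsup_eq, ?_⟩
  rw [htend.limsup_eq]
  exact lt_irrefl _
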